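/- Let M be a matroid on a finite ground set E, and let ∅ ⊊ S₁ ⊊ ⋯ ⊊ S_k ⊊ E be a chain of nonempty proper subsets of E (set S₀ = ∅ and S_{k+1} = E). Let w = ∑_{i=1}^k e_{S_i} ∈ ℝ^E, where e_S = ∑_{j∈S} e_j. Then the face of the base polytope P(M) on which the linear functional x ↦ ⟨x, w⟩ attains its maximum over P(M) is exactly the set of points x ∈ P(M) whose restriction to the coordinates indexed by S_{i+1}∖S_i lies in the base polytope P(M|S_{i+1}/S_i) ⊆ ℝ^{S_{i+1}∖S_i} for every i = 0,…,k; equivalently, under the identification ℝ^E ≅ ∏_{i=0}^k ℝ^{S_{i+1}∖S_i}, this face equals the product P(M|S₁) × P(M|S₂/S₁) × ⋯ × P(M/S_k). -/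

import Mathlib

open Matroid
open scoped Classical

variable {α : Type*}

/-- The base polytope of a matroid `M` on a finite ground type: the convex hull in `ℝ^α` of
the 0/1-indicator vectors of the bases of `M`. -/
noncomputable def basePolytope [Fintype α] (M : Matroid α) : Set (α → ℝ) :=
  convexHull ℝ {x | ∃ B, M.IsBase B ∧ x = fun i => if i ∈ B then (1 : ℝ) else 0}

/-- Contraction of a set `C` in the matroid `M`, defined via duality:
`M / C = (M✶ \ C)✶`, a matroid on `M.E \ C`. -/
def mcontract (M : Matroid α) (C : Set α) : Matroid α := (M✶ ↾ (M.E \ C))✶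

/-- The weight vector `w = ∑_{i=1}^{k} e_{S i}` associated to a chain
`∅ = S 0 ⊊ S 1 ⊊ ⋯ ⊊ S (k+1) = E`. -/
noncomputable def chainWeight [Fintype α] {k : ℕ} (S : Fin (k + 2) → Set α) (j : α) : ℝ :=
  ∑ i : Fin (k + 2), if i ≠ 0 ∧ i ≠ Fin.last (k + 1) ∧ j ∈ S i then 1 else 0

section Aux

open Set

lemma base_basis_of_subset {M : Matroid α} {B X : Set α} (hB : M.IsBase B) (hBX : B ⊆ X)
    (hX : X ⊆ M.E) : M.IsBasis B X :=
  hB.indep.isBasis_of_maximal_subset hBX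
    (fun J hJ hBJ _ => (hB.eq_of_subset_indep hJ hBJ) ▸ subset_rfl) hX

/-- Characterization of the bases of `mcontract M C`: they are the sets `B ⊆ M.E \ C` such
that `B ∪ I` is a base of `M` for some basis `I` of `C`. -/
lemma mcontract_base_iff (M : Matroid α) [Finite α] {C B : Set α} (hC : C ⊆ M.E) :
    (mcontract M C).IsBase B ↔ B ⊆ M.E \ C ∧ ∃ I, M.IsBasis I C ∧ M.IsBase (B ∪ I) := by
  have hEC : M.E \ C ⊆ M✶.E := by rw [dual_ground]; exact diff_subset
  rw [mcontract, dual_isBase_iff', isBase_restrict_iff', restrict_ground_eq,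
    isBasis'_iff_isBasis hEC]
  constructor
  · rintro ⟨hJ, hB⟩
    refine ⟨hB, ?_⟩
    set J := (M.E \ C) \ B with hJdef
    obtain ⟨B₀, hB₀, hdisj⟩ :=
      (dual_indep_iff_exists (M := M) (hJ.indep.subset_ground)).mp hJ.indep
    have hCB : C ∪ B ⊆ M.E := union_subset hC (hB.trans diff_subset)
    obtain ⟨I₀, hI₀⟩ := M.exists_isBasis C hC
    obtain ⟨B₁, hB₁, hI₀B₁⟩ :=
      hI₀.indep.subset_isBasis_of_subset (hI₀.subset.trans subset_union_left) hCB
    have hB₀X : B₀ ⊆ C ∪ B := by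
      intro e he
      by_contra heCB
      have heE : e ∈ M.E := hB₀.subset_ground he
      have : e ∈ J := ⟨⟨heE, fun h => heCB (Or.inl h)⟩, fun h => heCB (Or.inr h)⟩
      exact (disjoint_left.mp hdisj this) he
    have hB₀basis : M.IsBasis B₀ (C ∪ B) := base_basis_of_subset hB₀ hB₀X hCB
    obtain ⟨B₁', hB₁', hB₁B₁'⟩ := hB₁.indep.subset_isBasis_of_subset
      (hB₁.indep.subset_ground) rfl.subset
    have hB₁'base : M.IsBase B₁' := isBasis_ground_iff.mp hB₁'
    have hB₁base : M.IsBase B₁ := by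
      have h1 : B₁.encard = B₀.encard := hB₁.encard_eq_encard hB₀basis
      have h2 : B₀.encard = B₁'.encard := hB₀.encard_eq_encard_of_isBase hB₁'base
      have : B₁ = B₁' := Set.Finite.eq_of_subset_of_encard_le' (Set.toFinite B₁') hB₁B₁'
        (le_of_eq (h2 ▸ h1).symm)
      exact this ▸ hB₁'base
    have hBB₁ : B ⊆ B₁ := by
      intro e he
      by_contra heB₁
      have hins : M✶.Indep (insert e J) := by
        rw [dual_indep_iff_exists (M := M)
          (insert_subset ((hB.trans diff_subset) he) (hJ.indep.subset_ground))]
        refine ⟨B₁, hB₁base, ?_⟩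
        refine disjoint_left.mpr ?_
        rintro x (rfl | hx) hxB₁
        · exact heB₁ hxB₁
        · rcases hB₁.subset hxB₁ with hxC | hxB
          · exact hx.1.2 hxC
          · exact hx.2 hxB
      have heXJ : e ∈ (M.E \ C) \ J := ⟨hB he, fun hJe => hJe.2 he⟩
      exact hJ.isBasis'.insert_not_indep heXJ hins
    refine ⟨B₁ \ B, ?_, ?_⟩
    · have hsub : B₁ \ B ⊆ C := fun x hx => (hB₁.subset hx.1).elim id (fun h => absurd h hx.2)
      have hI₀sub : I₀ ⊆ B₁ \ B := fun x hx =>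
        ⟨hI₀B₁ hx, fun hxB => (hB hxB).2 (hI₀.subset hx)⟩
      have := hI₀.eq_of_subset_indep (hB₁base.indep.subset diff_subset) hI₀sub hsub
      exact this ▸ hI₀
    · rwa [union_diff_self, union_eq_self_of_subset_left hBB₁]
  · rintro ⟨hB, I, hI, hBI⟩
    refine ⟨?_, hB⟩
    set J := (M.E \ C) \ B with hJdef
    have hJE : J ⊆ M✶.E := hEC.trans' diff_subset
    have hJindep : M✶.Indep J := by
      rw [dual_indep_iff_exists (M := M) (hJE)]
      exact ⟨B ∪ I, hBI, disjoint_left.mpr fun x hx hxBI =>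
        hxBI.elim (fun h => hx.2 h) (fun h => hx.1.2 (hI.subset h))⟩
    refine hJindep.isBasis_of_maximal_subset diff_subset ?_ hEC
    intro K hK hJK hKX
    by_contra hKJ
    obtain ⟨e, heK, heJ⟩ := not_subset.mp hKJ
    have heB : e ∈ B := by
      have := hKX heK
      by_contra heB
      exact heJ ⟨this, heB⟩
    have hins : M✶.Indep (insert e J) := hK.subset (insert_subset heK hJK)
    obtain ⟨B₂, hB₂, hdisj₂⟩ := (dual_indep_iff_exists (M := M)
      (hins.subset_ground)).mp hins
    have hB₂sub : B₂ ⊆ C ∪ B := by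
      intro x hx
      by_contra hxCB
      have hxE : x ∈ M.E := hB₂.subset_ground hx
      have hxJ : x ∈ J := ⟨⟨hxE, fun h => hxCB (Or.inl h)⟩, fun h => hxCB (Or.inr h)⟩
      exact (disjoint_left.mp hdisj₂ (Or.inr hxJ)) hx
    have heB₂ : e ∉ B₂ := fun h => (disjoint_left.mp hdisj₂ (Or.inl rfl)) h
    obtain ⟨f, hf, hfbase⟩ := hBI.exchange hB₂ ⟨Or.inl heB, heB₂⟩
    have hfC : f ∈ C \ I := by
      rcases hB₂sub hf.1 with hfc | hfb
      · exact ⟨hfc, fun hfI => hf.2 (Or.inr hfI)⟩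
      · exact absurd (Or.inl hfb) hf.2
    have hfIindep : M.Indep (insert f I) := by
      refine hfbase.indep.subset ?_
      intro x hx
      rcases hx with rfl | hxI
      · exact mem_insert _ _
      · refine mem_insert_of_mem _ ⟨Or.inr hxI, ?_⟩
        simp only [mem_singleton_iff]
        rintro rfl
        exact (hB heB).2 (hI.subset hxI)
    exact hfC.2 (hI.mem_of_insert_indep hfC.1 hfIindep)

/-- The rank of a set in a matroid, as a natural number. -/
noncomputable def rnk (M : Matroid α) (X : Set α) : ℕ := (M.exists_isBasis' X).choose.ncard

lemma basis'_ncard_rnk {M : Matroid α} {I X : Set α} (hI : M.IsBasis' I X) :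
    I.ncard = rnk M X := by
  have h := (M.exists_isBasis' X).choose_spec
  rw [rnk, Set.ncard_def, Set.ncard_def, hI.encard_eq_encard h]

lemma basis_ncard_rnk {M : Matroid α} {I X : Set α} (hI : M.IsBasis I X) :
    I.ncard = rnk M X := basis'_ncard_rnk hI.isBasis'

lemma rnk_empty (M : Matroid α) : rnk M ∅ = 0 := by
  have : M.IsBasis ∅ ∅ := M.empty_indep.isBasis_self
  rw [← basis_ncard_rnk this, Set.ncard_empty]

lemma indep_ncard_le_rnk [Finite α] {M : Matroid α} {I X : Set α} (hI : M.Indep I)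
    (hIX : I ⊆ X) : I.ncard ≤ rnk M X := by
  obtain ⟨J, hJ, hIJ⟩ := hI.subset_isBasis'_of_subset hIX
  rw [← basis'_ncard_rnk hJ]
  exact Set.ncard_le_ncard hIJ (Set.toFinite J)

lemma basis_of_indep_of_rnk_le [Finite α] {M : Matroid α} {I X : Set α} (hI : M.Indep I)
    (hIX : I ⊆ X) (hX : X ⊆ M.E) (hcard : rnk M X ≤ I.ncard) : M.IsBasis I X := by
  obtain ⟨J, hJ, hIJ⟩ := hI.subset_isBasis_of_subset hIX hX
  have : I = J := Set.eq_of_subset_of_ncard_le hIJ (basis_ncard_rnk hJ ▸ hcard) (Set.toFinite J)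
  exact this ▸ hJ

lemma block_base {M : Matroid α} [Finite α] {C X B : Set α} (hCX : C ⊆ X) (hXE : X ⊆ M.E)
    (h1 : M.IsBasis (B ∩ X) X) (h2 : M.IsBasis (B ∩ C) C) :
    (mcontract (M ↾ X) C).IsBase (B ∩ (X \ C)) := by
  rw [mcontract_base_iff (M ↾ X) (by rw [restrict_ground_eq]; exact hCX)]
  rw [restrict_ground_eq]
  refine ⟨inter_subset_right, B ∩ C, ?_, ?_⟩
  · rw [isBasis_restrict_iff hXE]
    exact ⟨h2, hCX⟩
  · have : B ∩ (X \ C) ∪ B ∩ C = B ∩ X := by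
      rw [← inter_union_distrib_left, diff_union_of_subset hCX]
    rw [this, isBase_restrict_iff hXE]
    exact h1

lemma mcontract_base_ncard {M : Matroid α} [Finite α] {C X D : Set α}
    (hCX : C ⊆ X) (hXE : X ⊆ M.E)
    (hD : (mcontract (M ↾ X) C).IsBase D) : rnk M C + D.ncard = rnk M X := by
  rw [mcontract_base_iff (M ↾ X) (by rw [restrict_ground_eq]; exact hCX),
    restrict_ground_eq] at hD
  obtain ⟨hDs, I, hI, hDI⟩ := hD
  rw [isBasis_restrict_iff hXE] at hI
  rw [isBase_restrict_iff hXE] at hDI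
  rw [← basis_ncard_rnk hI.1, ← basis_ncard_rnk hDI,
    Set.ncard_union_eq (disjoint_left.mpr fun x hx hxI => (hDs hx).2 (hI.1.subset hxI))
      (Set.toFinite D) (Set.toFinite I), add_comm]

lemma exists_nested_basis {M : Matroid α} {k : ℕ} {S : Fin (k + 2) → Set α}
    (hS0 : S 0 = ∅) (hSE : ∀ i, S i ⊆ M.E)
    (hmono : Monotone S) (j : Fin (k + 2)) :
    ∃ I, M.IsBasis I (S j) ∧ ∀ m, m ≤ j → M.IsBasis (I ∩ S m) (S m) := by
  induction j using Fin.induction with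
  | zero =>
    refine ⟨∅, by rw [hS0]; exact M.empty_indep.isBasis_self, fun m hm => ?_⟩
    rw [Fin.le_zero_iff] at hm
    subst hm
    rw [hS0, inter_empty]
    exact M.empty_indep.isBasis_self
  | succ i ih =>
    obtain ⟨I, hI, hall⟩ := ih
    obtain ⟨J, hJ, hJI⟩ := hI.exists_isBasis_inter_eq_of_superset
      (hmono (Fin.castSucc_lt_succ (i := i)).le) (hSE i.succ)
    refine ⟨J, hJ, fun m hm => ?_⟩
    rcases eq_or_lt_of_le hm with rfl | hlt
    · rwa [inter_eq_self_of_subset_left hJ.subset]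
    · have hm' : m ≤ i.castSucc := Fin.le_castSucc_iff.mpr hlt
      have : J ∩ S m = (J ∩ S i.castSucc) ∩ S m := by
        rw [inter_assoc, inter_eq_self_of_subset_right (hmono hm')]
      rw [this, hJI]
      exact hall m hm'

variable [Fintype α]

lemma sum_indicator_inter (B T : Set α) :
    ∑ j ∈ T.toFinset, (if j ∈ B then (1 : ℝ) else 0) = ((B ∩ T).ncard : ℝ) := by
  rw [Finset.sum_boole]
  norm_num
  rw [Set.ncard_eq_toFinset_card']
  congr 1
  ext j
  simp [Set.mem_toFinset, and_comm]

lemma sum_indicator_univ (B : Set α) :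
    ∑ j : α, (if j ∈ B then (1 : ℝ) else 0) = (B.ncard : ℝ) := by
  rw [Finset.sum_boole]
  norm_num
  rw [Set.ncard_eq_toFinset_card']
  congr 1
  ext j
  simp [Set.mem_toFinset]

lemma weight_linear (w : α → ℝ) : IsLinearMap ℝ (fun x : α → ℝ => ∑ j, x j * w j) := by
  constructor
  · intro x y
    simp [add_mul, Finset.sum_add_distrib]
  · intro c x
    simp only [Pi.smul_apply, smul_eq_mul, Finset.mul_sum, mul_assoc]

lemma restrict_linear (T : Set α) :
    IsLinearMap ℝ (fun x : α → ℝ => (fun j => if j ∈ T then x j else 0)) := by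
  constructor
  · intro x y
    funext j
    by_cases h : j ∈ T <;> simp [h]
  · intro c x
    funext j
    by_cases h : j ∈ T <;> simp [h]

lemma coordsum_linear : IsLinearMap ℝ (fun x : α → ℝ => ∑ j, x j) := by
  constructor
  · intro x y
    simp [Finset.sum_add_distrib]
  · intro c x
    simp [Finset.mul_sum]

end Aux

theorem stmt19 [Fintype α] (M : Matroid α) (k : ℕ)
    (S : Fin (k + 2) → Set α) (hS0 : S 0 = ∅) (hSlast : S (Fin.last (k + 1)) = M.E)
    (hchain : ∀ i : Fin (k + 1), S i.castSucc ⊂ S i.succ) :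
    {x ∈ basePolytope M | ∀ y ∈ basePolytope M,
        ∑ j, y j * chainWeight S j ≤ ∑ j, x j * chainWeight S j}
      = {x ∈ basePolytope M | ∀ i : Fin (k + 1),
          (fun j => if j ∈ S i.succ \ S i.castSucc then x j else 0)
            ∈ basePolytope (mcontract (M ↾ S i.succ) (S i.castSucc))} := by
  classical
  have hmono : Monotone S := (Fin.strictMono_iff_lt_succ.mpr (fun i => hchain i)).monotone
  have hSE : ∀ i, S i ⊆ M.E := fun i => hSlast ▸ hmono (Fin.le_last i)
  set c : ℝ := ∑ i : Fin (k + 2),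
      (if i ≠ 0 ∧ i ≠ Fin.last (k + 1) then ((rnk M (S i) : ℝ)) else 0) with hcdef
  -- rewriting the weight sum blockwise
  have hval_eq : ∀ x : α → ℝ, ∑ j, x j * chainWeight S j
      = ∑ i : Fin (k + 2),
        (if i ≠ 0 ∧ i ≠ Fin.last (k + 1) then ∑ j ∈ (S i).toFinset, x j else 0) := by
    intro x
    unfold chainWeight
    simp_rw [Finset.mul_sum]
    rw [Finset.sum_comm]
    refine Finset.sum_congr rfl fun i _ => ?_
    by_cases h : i ≠ 0 ∧ i ≠ Fin.last (k + 1)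
    · rw [if_pos h]
      have hpt : ∀ j, x j * (if i ≠ 0 ∧ i ≠ Fin.last (k + 1) ∧ j ∈ S i then (1 : ℝ) else 0)
          = if j ∈ (S i).toFinset then x j else 0 := by
        intro j
        by_cases hj : j ∈ S i
        · rw [if_pos ⟨h.1, h.2, hj⟩, if_pos (Set.mem_toFinset.mpr hj), mul_one]
        · rw [if_neg (fun hcon => hj hcon.2.2),
            if_neg (fun hcon => hj (Set.mem_toFinset.mp hcon)), mul_zero]
      simp_rw [hpt]
      rw [Finset.sum_ite_mem, Finset.univ_inter]
    · rw [if_neg h]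
      refine Finset.sum_eq_zero fun j _ => ?_
      rw [if_neg (fun hcon => h ⟨hcon.1, hcon.2.1⟩), mul_zero]
  -- value at a vertex
  have hvtx_val : ∀ B : Set α,
      ∑ j, (if j ∈ B then (1 : ℝ) else 0) * chainWeight S j
      = ∑ i : Fin (k + 2),
          (if i ≠ 0 ∧ i ≠ Fin.last (k + 1) then ((B ∩ S i).ncard : ℝ) else 0) := by
    intro B
    rw [hval_eq]
    refine Finset.sum_congr rfl fun i _ => ?_
    by_cases h : i ≠ 0 ∧ i ≠ Fin.last (k + 1)
    · rw [if_pos h, if_pos h, sum_indicator_inter]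
    · rw [if_neg h, if_neg h]
  have hvtx_le : ∀ B : Set α, M.IsBase B →
      ∑ j, (if j ∈ B then (1 : ℝ) else 0) * chainWeight S j ≤ c := by
    intro B hB
    rw [hvtx_val B, hcdef]
    refine Finset.sum_le_sum fun i _ => ?_
    by_cases h : i ≠ 0 ∧ i ≠ Fin.last (k + 1)
    · rw [if_pos h, if_pos h]
      exact_mod_cast indep_ncard_le_rnk (hB.indep.subset Set.inter_subset_left)
        Set.inter_subset_right
    · rw [if_neg h, if_neg h]
  -- bases achieving the max are exactly nested-basis bases
  have heqcase : ∀ B : Set α, M.IsBase B →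
      (∑ j, (if j ∈ B then (1 : ℝ) else 0) * chainWeight S j = c) →
      ∀ m, M.IsBasis (B ∩ S m) (S m) := by
    intro B hB hvalc m
    have hle : ∀ i ∈ Finset.univ,
        (if i ≠ 0 ∧ i ≠ Fin.last (k + 1) then ((B ∩ S i).ncard : ℝ) else 0)
        ≤ (if i ≠ 0 ∧ i ≠ Fin.last (k + 1) then ((rnk M (S i) : ℝ)) else 0) := by
      intro i _
      by_cases h : i ≠ 0 ∧ i ≠ Fin.last (k + 1)
      · rw [if_pos h, if_pos h]
        exact_mod_cast indep_ncard_le_rnk (hB.indep.subset Set.inter_subset_left)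
          Set.inter_subset_right
      · rw [if_neg h, if_neg h]
    have heq := (Finset.sum_eq_sum_iff_of_le hle).mp
      ((hvtx_val B).symm.trans (hvalc.trans hcdef))
    by_cases hm0 : m = 0
    · subst hm0
      rw [hS0, Set.inter_empty]
      exact M.empty_indep.isBasis_self
    by_cases hml : m = Fin.last (k + 1)
    · subst hml
      rw [hSlast, Set.inter_eq_self_of_subset_left hB.subset_ground]
      exact hB.isBasis_ground
    · have := heq m (Finset.mem_univ m)
      rw [if_pos ⟨hm0, hml⟩, if_pos ⟨hm0, hml⟩] at this
      have hcard : (B ∩ S m).ncard = rnk M (S m) := by exact_mod_cast this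
      exact basis_of_indep_of_rnk_le (hB.indep.subset Set.inter_subset_left)
        Set.inter_subset_right (hSE m) hcard.ge
  -- existence of a maximizing vertex
  obtain ⟨Bopt, hBoptB, hBoptall⟩ :
      ∃ B, M.IsBase B ∧ ∀ m, M.IsBasis (B ∩ S m) (S m) := by
    obtain ⟨I, hI, hall⟩ := exists_nested_basis hS0 hSE hmono (Fin.last (k + 1))
    rw [hSlast] at hI
    exact ⟨I, isBasis_ground_iff.mp hI, fun m => hall m (Fin.le_last m)⟩
  have hopt_val : ∀ B : Set α, (∀ m, M.IsBasis (B ∩ S m) (S m)) →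
      ∑ j, (if j ∈ B then (1 : ℝ) else 0) * chainWeight S j = c := by
    intro B hall
    rw [hvtx_val B, hcdef]
    refine Finset.sum_congr rfl fun i _ => ?_
    by_cases h : i ≠ 0 ∧ i ≠ Fin.last (k + 1)
    · rw [if_pos h, if_pos h, basis_ncard_rnk (hall i) ]
    · rw [if_neg h, if_neg h]
  -- the upper bound on the polytope
  have hA : ∀ y ∈ basePolytope M, ∑ j, y j * chainWeight S j ≤ c := by
    intro y hy
    have hsub : basePolytope M ⊆ {x | ∑ j, x j * chainWeight S j ≤ c} :=
      convexHull_min (by rintro _ ⟨B, hB, rfl⟩; exact hvtx_le B hB)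
        (convex_halfSpace_le (weight_linear (chainWeight S)) c)
    exact hsub hy
  have hblockbase : ∀ B : Set α, (∀ m, M.IsBasis (B ∩ S m) (S m)) → ∀ i : Fin (k + 1),
      (mcontract (M ↾ S i.succ) (S i.castSucc)).IsBase (B ∩ (S i.succ \ S i.castSucc)) :=
    fun B hall i => block_base (hmono (Fin.castSucc_lt_succ (i := i)).le) (hSE i.succ)
      (hall i.succ) (hall i.castSucc)
  -- block coordinate sums on minor polytopes
  have hblocksum : ∀ (i : Fin (k + 1)) (x : α → ℝ),
      (fun j => if j ∈ S i.succ \ S i.castSucc then x j else 0)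
        ∈ basePolytope (mcontract (M ↾ S i.succ) (S i.castSucc)) →
      ∑ j ∈ (S i.succ \ S i.castSucc).toFinset, x j
        = (rnk M (S i.succ) : ℝ) - rnk M (S i.castSucc) := by
    intro i x hx
    have hconst : ∀ z ∈ basePolytope (mcontract (M ↾ S i.succ) (S i.castSucc)),
        (∑ j, z j) = (rnk M (S i.succ) : ℝ) - rnk M (S i.castSucc) := by
      intro z hz
      refine convexHull_min ?_
        (convex_hyperplane coordsum_linear ((rnk M (S i.succ) : ℝ) - rnk M (S i.castSucc))) hz
      rintro _ ⟨D, hD, rfl⟩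
      have h1 := mcontract_base_ncard (hmono (Fin.castSucc_lt_succ (i := i)).le) (hSE i.succ) hD
      have h2 := congrArg (Nat.cast : ℕ → ℝ) h1
      push_cast at h2
      show ∑ j, (if j ∈ D then (1 : ℝ) else 0)
        = (rnk M (S i.succ) : ℝ) - rnk M (S i.castSucc)
      rw [sum_indicator_univ]
      linarith
    have h3 := hconst _ hx
    rw [← h3]
    have hpt : ∀ j : α, (if j ∈ S i.succ \ S i.castSucc then x j else 0)
        = if j ∈ (S i.succ \ S i.castSucc).toFinset then x j else 0 := fun j => by
      by_cases hj : j ∈ S i.succ \ S i.castSucc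
      · rw [if_pos hj, if_pos (Set.mem_toFinset.mpr hj)]
      · rw [if_neg hj, if_neg (fun hc => hj (Set.mem_toFinset.mp hc))]
    calc ∑ j ∈ (S i.succ \ S i.castSucc).toFinset, x j
        = ∑ j, (if j ∈ (S i.succ \ S i.castSucc).toFinset then x j else 0) := by
          rw [Finset.sum_ite_mem, Finset.univ_inter]
      _ = ∑ j, (if j ∈ S i.succ \ S i.castSucc then x j else 0) := by simp_rw [hpt]
  -- if all block restrictions are in the minor polytopes, the value is c
  have hval_blocks : ∀ x : α → ℝ,
      (∀ i : Fin (k + 1), (fun j => if j ∈ S i.succ \ S i.castSucc then x j else 0)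
        ∈ basePolytope (mcontract (M ↾ S i.succ) (S i.castSucc))) →
      ∑ j, x j * chainWeight S j = c := by
    intro x hbl
    have hFm : ∀ m : Fin (k + 2), ∑ j ∈ (S m).toFinset, x j = (rnk M (S m) : ℝ) := by
      intro m
      induction m using Fin.induction with
      | zero =>
        rw [hS0]
        simp [rnk_empty M]
      | succ i ih =>
        have hsub := hmono (Fin.castSucc_lt_succ (i := i)).le
        have hun : (S i.castSucc).toFinset ∪ (S i.succ \ S i.castSucc).toFinset
            = (S i.succ).toFinset := by
          ext j
          simp only [Finset.mem_union, Set.mem_toFinset, Set.mem_diff]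
          exact ⟨fun h => h.elim (fun h' => hsub h') (fun h' => h'.1),
            fun h => Classical.byCases (fun hc : j ∈ S i.castSucc => Or.inl hc)
              (fun hc => Or.inr ⟨h, hc⟩)⟩
        have hdis : Disjoint ((S i.castSucc).toFinset)
            ((S i.succ \ S i.castSucc).toFinset) :=
          Finset.disjoint_left.mpr fun j hj hj' =>
            (Set.mem_toFinset.mp hj').2 (Set.mem_toFinset.mp hj)
        rw [← hun, Finset.sum_union hdis, ih, hblocksum i x (hbl i)]
        ring
    rw [hval_eq, hcdef]
    refine Finset.sum_congr rfl fun i _ => ?_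
    by_cases h : i ≠ 0 ∧ i ≠ Fin.last (k + 1)
    · rw [if_pos h, if_pos h, hFm i]
    · rw [if_neg h, if_neg h]
  -- final set equality
  ext x
  simp only [Set.mem_setOf_eq]
  constructor
  · rintro ⟨hxP, hmax⟩
    have hxc : ∑ j, x j * chainWeight S j = c := by
      refine le_antisymm (hA x hxP) ?_
      have hvm : (fun j => if j ∈ Bopt then (1 : ℝ) else 0) ∈ basePolytope M :=
        subset_convexHull ℝ _ ⟨Bopt, hBoptB, rfl⟩
      have := hmax _ hvm
      rw [hopt_val Bopt hBoptall] at this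
      exact this
    refine ⟨hxP, ?_⟩
    -- convex decomposition
    have hxP' := hxP
    rw [basePolytope, convexHull_eq] at hxP'
    obtain ⟨ι, t, a, z, ha0, ha1, hzV, hxx⟩ := hxP'
    simp only [Set.mem_setOf_eq] at hzV
    choose Bz hBz hzB using hzV
    have hxsum : x = ∑ i ∈ t, a i • z i := by
      rw [← hxx, Finset.centerMass_eq_of_sum_1 _ _ ha1]
    have hvalsum : ∑ j, x j * chainWeight S j
        = ∑ i ∈ t, a i * (∑ j, z i j * chainWeight S j) := by
      have hL : ∀ y : α → ℝ, ∑ j, y j * chainWeight S j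
          = IsLinearMap.mk' _ (weight_linear (chainWeight S)) y := fun _ => rfl
      rw [hL, hxsum, map_sum]
      refine Finset.sum_congr rfl fun i _ => ?_
      rw [map_smul, smul_eq_mul, hL]
    have heach : ∀ i ∈ t, a i ≠ 0 → ∑ j, z i j * chainWeight S j = c := by
      have hle : ∀ i ∈ t, a i * (∑ j, z i j * chainWeight S j) ≤ a i * c := by
        intro i hi
        refine mul_le_mul_of_nonneg_left ?_ (ha0 i hi)
        rw [hzB i hi]
        simpa using hvtx_le (Bz i hi) (hBz i hi)
      have hsums : ∑ i ∈ t, a i * (∑ j, z i j * chainWeight S j) = ∑ i ∈ t, a i * c := by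
        rw [← hvalsum, hxc, ← Finset.sum_mul, ha1, one_mul]
      have hall := (Finset.sum_eq_sum_iff_of_le hle).mp hsums
      intro i hi hai
      exact mul_left_cancel₀ hai (hall i hi)
    intro ℓ
    have ht'sum : ∑ i ∈ t.filter (fun i => a i ≠ 0), a i = 1 := by
      rw [Finset.sum_filter_ne_zero]; exact ha1
    have hx' : x = ∑ i ∈ t.filter (fun i => a i ≠ 0), a i • z i := by
      rw [← hxx, ← Finset.centerMass_filter_ne_zero (w := a),
        Finset.centerMass_eq_of_sum_1 _ _ ht'sum]
    have hρ : ∀ y : α → ℝ, (fun j => if j ∈ S ℓ.succ \ S ℓ.castSucc then y j else 0)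
        = IsLinearMap.mk' _ (restrict_linear (S ℓ.succ \ S ℓ.castSucc)) y :=
      fun y => by
      rw [IsLinearMap.mk'_apply]
      funext j
      by_cases hj : j ∈ S ℓ.succ \ S ℓ.castSucc
      · rw [if_pos hj, if_pos hj]
      · rw [if_neg hj, if_neg hj]
    have hmem : ∀ i ∈ t.filter (fun i => a i ≠ 0),
        IsLinearMap.mk' _ (restrict_linear (S ℓ.succ \ S ℓ.castSucc)) (z i)
          ∈ {x : α → ℝ | ∃ B, (mcontract (M ↾ S ℓ.succ) (S ℓ.castSucc)).IsBase B
              ∧ x = fun j => if j ∈ B then (1 : ℝ) else 0} := by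
      intro i hi
      obtain ⟨hit, hai⟩ := Finset.mem_filter.mp hi
      have hvz : ∑ j, (if j ∈ Bz i hit then (1 : ℝ) else 0) * chainWeight S j = c := by
        have := heach i hit hai
        rw [hzB i hit] at this
        simpa using this
      have hallm := heqcase _ (hBz i hit) hvz
      refine ⟨Bz i hit ∩ (S ℓ.succ \ S ℓ.castSucc), hblockbase _ hallm ℓ, ?_⟩
      rw [← hρ, hzB i hit]
      funext j
      by_cases h1 : j ∈ S ℓ.succ \ S ℓ.castSucc <;> by_cases h2 : j ∈ Bz i hit <;>
        simp [h1, h2]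
    have hfinal := Finset.centerMass_mem_convexHull (t.filter (fun i => a i ≠ 0))
      (fun i hi => ha0 i (Finset.mem_filter.mp hi).1) (by rw [ht'sum]; norm_num) hmem
    rw [Finset.centerMass_eq_of_sum_1 _ _ ht'sum] at hfinal
    rw [hρ, hx', map_sum]
    simp_rw [map_smul]
    exact hfinal
  · rintro ⟨hxP, hbl⟩
    have hxc := hval_blocks x hbl
    exact ⟨hxP, fun y hy => (hA y hy).trans hxc.ge⟩
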